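/- Let F be a field and n ≥ 3. There is a constant C_n, depending only on n, with the following property: if 𝔏 is a finite collection of L lines in F^n and K is a subset of the set of joints of 𝔏, then K can be partitioned into at most L pairwise disjoint sets, each of cardinality at most C_n · |K|^{1/n}. -/

import Mathlib

/-- A line in `F^n`: a set of the form `{v + t • b : t ∈ F}` with `b ≠ 0`. -/
def IsLine (F : Type*) [Field F] {n : ℕ} (l : Set (Fin n → F)) : Prop :=
  ∃ v b : Fin n → F, b ≠ 0 ∧ l = {x | ∃ t : F, x = v + t • b}

/-- `b` is a direction of the line `l`. -/
def IsDirection (F : Type*) [Field F] {n : ℕ} (b : Fin n → F) (l : Set (Fin n → F)) : Prop :=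
  b ≠ 0 ∧ ∃ v : Fin n → F, l = {x | ∃ t : F, x = v + t • b}

/-- The lines `l 0, …, l (n-1)` form a joint at `x`: each passes through `x` and
their directions span `F^n`. -/
def FormsJoint (F : Type*) [Field F] {n : ℕ} (l : Fin n → Set (Fin n → F))
    (x : Fin n → F) : Prop :=
  (∀ i, x ∈ l i) ∧ ∃ b : Fin n → Fin n → F,
    (∀ i, IsDirection F (b i) (l i)) ∧ Submodule.span F (Set.range b) = ⊤

/-- `x` is a joint of the collection `𝔏`: there are (at least) `n` distinct lines of `𝔏`
through `x` whose directions span `F^n`. -/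
def IsJoint (F : Type*) [Field F] {n : ℕ} (𝔏 : Set (Set (Fin n → F)))
    (x : Fin n → F) : Prop :=
  ∃ l : Fin n → Set (Fin n → F), Function.Injective l ∧ (∀ i, l i ∈ 𝔏) ∧ FormsJoint F l x

/-- The multiplicity `N(x)`: the number of `n`-tuples of lines of `𝔏` forming a joint at `x`. -/
noncomputable def jointMult (F : Type*) [Field F] {n : ℕ} (𝔏 : Set (Set (Fin n → F)))
    (x : Fin n → F) : ℕ :=
  Set.ncard {l : Fin n → Set (Fin n → F) | (∀ i, l i ∈ 𝔏) ∧ FormsJoint F l x}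

/-- `𝔏` is generic: whenever `n` distinct lines of `𝔏` pass through a common point,
they form a joint there. -/
def Generic (F : Type*) [Field F] {n : ℕ} (𝔏 : Set (Set (Fin n → F))) : Prop :=
  ∀ (l : Fin n → Set (Fin n → F)) (x : Fin n → F), Function.Injective l →
    (∀ i, l i ∈ 𝔏) → (∀ i, x ∈ l i) → FormsJoint F l x

variable {F : Type*} [Field F] {n : ℕ}

lemma line_param_inj {b : Fin n → F} (hb : b ≠ 0) (v : Fin n → F) :
    Function.Injective (fun t : F => v + t • b) := by
  intro t s h
  have h' : t • b = s • b := by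
    have := congrArg (fun w => w - v) h
    simpa using this
  have : (t - s) • b = 0 := by rw [sub_smul, h', sub_self]
  rcases smul_eq_zero.1 this with h2 | h2
  · exact sub_eq_zero.1 h2
  · exact absurd h2 hb

lemma mem_line_base {l : Set (Fin n → F)} {b x : Fin n → F}
    (hd : IsDirection F b l) (hx : x ∈ l) :
    l = {z | ∃ t : F, z = x + t • b} := by
  obtain ⟨hb, v, rfl⟩ := hd
  obtain ⟨s, rfl⟩ := hx
  ext z
  constructor
  · rintro ⟨t, rfl⟩
    exact ⟨t - s, by module⟩
  · rintro ⟨t, rfl⟩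
    exact ⟨s + t, by module⟩

lemma line_eq_two_pt {l : Set (Fin n → F)} (hl : IsLine F l) {x y : Fin n → F}
    (hx : x ∈ l) (hy : y ∈ l) (hxy : x ≠ y) :
    l = {z | ∃ t : F, z = x + t • (y - x)} := by
  obtain ⟨v, b, hb, rfl⟩ := hl
  obtain ⟨s, rfl⟩ := hx
  obtain ⟨u, rfl⟩ := hy
  have hus : u - s ≠ 0 := by
    intro h
    exact hxy (by rw [sub_eq_zero] at h; rw [h])
  have key : (v + u • b) - (v + s • b) = (u - s) • b := by module
  ext z
  constructor
  · rintro ⟨t, rfl⟩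
    refine ⟨(t - s) / (u - s), ?_⟩
    rw [key, smul_smul, div_mul_cancel₀ _ hus]
    module
  · rintro ⟨c, rfl⟩
    refine ⟨s + c * (u - s), ?_⟩
    rw [key, smul_smul]
    module

lemma eq_of_two_mem {l l' : Set (Fin n → F)} (hl : IsLine F l) (hl' : IsLine F l')
    {x y : Fin n → F} (hx : x ∈ l) (hy : y ∈ l) (hx' : x ∈ l') (hy' : y ∈ l')
    (hxy : x ≠ y) : l = l' := by
  rw [line_eq_two_pt hl hx hy hxy, line_eq_two_pt hl' hx' hy' hxy]

lemma direction_proportional {l : Set (Fin n → F)} {b b' : Fin n → F}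
    (h : IsDirection F b l) (h' : IsDirection F b' l) :
    ∃ c : F, c ≠ 0 ∧ b' = c • b := by
  obtain ⟨hb, v, hv⟩ := h
  obtain ⟨hb', v', hv'⟩ := h'
  have hvmem : v' ∈ l := by rw [hv']; exact ⟨0, by simp⟩
  rw [hv] at hvmem
  obtain ⟨s, hs⟩ := hvmem
  have hmem : v' + b' ∈ l := by rw [hv']; exact ⟨1, by simp⟩
  rw [hv] at hmem
  obtain ⟨t, ht⟩ := hmem
  have key : b' = (t - s) • b := by
    rw [hs] at ht
    calc b' = (v + s • b + b') - (v + s • b) := by module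
    _ = (v + t • b) - (v + s • b) := by rw [ht]
    _ = (t - s) • b := by module
  refine ⟨t - s, ?_, key⟩
  intro h0
  apply hb'
  rw [key, h0, zero_smul]

lemma line_smul_direction (v b : Fin n → F) {c : F} (hc : c ≠ 0) :
    {x : Fin n → F | ∃ t : F, x = v + t • (c • b)} = {x | ∃ t : F, x = v + t • b} := by
  ext z
  constructor
  · rintro ⟨t, rfl⟩; exact ⟨t * c, by rw [smul_smul]⟩
  · rintro ⟨t, rfl⟩; exact ⟨t / c, by rw [smul_smul, div_mul_cancel₀ _ hc]⟩

lemma joints_finite (hn : 2 ≤ n) {𝔏 : Finset (Set (Fin n → F))}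
    (hlines : ∀ l ∈ 𝔏, IsLine F l) {K : Set (Fin n → F)}
    (hK : ∀ x ∈ K, IsJoint F ↑𝔏 x) : K.Finite := by
  classical
  set f : (Fin n → F) → (Set (Fin n → F) × Set (Fin n → F)) := fun x =>
    if h : IsJoint F ↑𝔏 x then (h.choose ⟨0, by omega⟩, h.choose ⟨1, by omega⟩) else (∅, ∅)
    with hf
  have himg : f '' K ⊆ (↑𝔏 ×ˢ ↑𝔏 : Set _) := by
    rintro ⟨a, b⟩ ⟨x, hx, hfx⟩
    have h := hK x hx
    simp only [hf, dif_pos h] at hfx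
    obtain ⟨hinj, hmem, hforms⟩ := h.choose_spec
    rw [Prod.mk.injEq] at hfx
    exact ⟨hfx.1 ▸ hmem _, hfx.2 ▸ hmem _⟩
  have hinj : Set.InjOn f K := by
    intro x hx y hy hxy
    by_contra hne
    have h1 := hK x hx
    have h2 := hK y hy
    simp only [hf, dif_pos h1, dif_pos h2, Prod.mk.injEq] at hxy
    obtain ⟨hinj1, hmem1, hforms1⟩ := h1.choose_spec
    obtain ⟨hinj2, hmem2, hforms2⟩ := h2.choose_spec
    set l0 := h1.choose ⟨0, by omega⟩
    set l1 := h1.choose ⟨1, by omega⟩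
    have hl0 : IsLine F l0 := hlines _ (hmem1 _)
    have hl1 : IsLine F l1 := hlines _ (hmem1 _)
    have hx0 : x ∈ l0 := hforms1.1 _
    have hx1 : x ∈ l1 := hforms1.1 _
    have hy0 : y ∈ l0 := by rw [hxy.1]; exact hforms2.1 _
    have hy1 : y ∈ l1 := by rw [hxy.2]; exact hforms2.1 _
    have : l0 = l1 := eq_of_two_mem hl0 hl1 hx0 hy0 hx1 hy1 hne
    have h01 : (⟨0, by omega⟩ : Fin n) = ⟨1, by omega⟩ := hinj1 this
    simp [Fin.ext_iff] at h01
  exact Set.Finite.of_finite_image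
    (Set.Finite.subset (Set.Finite.prod 𝔏.finite_toSet 𝔏.finite_toSet) himg) hinj

open MvPolynomial in
lemma exists_vanishing_poly {S : Set (Fin n → F)} (hS : S.Finite) {m : ℕ}
    (hcard : S.ncard < (m + 1) ^ n) :
    ∃ p : MvPolynomial (Fin n) F, p ≠ 0 ∧ p.totalDegree ≤ n * m ∧
      ∀ x ∈ S, eval x p = 0 := by
  classical
  haveI := hS.fintype
  set q : (Fin n → Fin (m + 1)) → (Fin n → F) → F := fun α x => ∏ i, x i ^ (α i : ℕ) with hq
  set T : ((Fin n → Fin (m + 1)) → F) →ₗ[F] (S → F) :=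
    { toFun := fun c s => ∑ α, c α * q α (s : Fin n → F)
      map_add' := by intro a b; funext s; simp [add_mul, Finset.sum_add_distrib]
      map_smul' := by intro a b; funext s; simp [Finset.mul_sum, mul_assoc] } with hT
  have hnotinj : ¬ Function.Injective T := by
    intro hinj
    have := LinearMap.finrank_le_finrank_of_injective hinj
    rw [Module.finrank_pi, Module.finrank_pi] at this
    simp only [Fintype.card_pi, Fintype.card_fin, Finset.prod_const, Finset.card_univ] at this
    rw [Set.ncard_eq_toFinset_card' ] at hcard
    simp [Set.toFinset_card] at hcard
    have h' : S.ncard = Fintype.card S := by rw [Set.ncard_eq_toFinset_card', Set.toFinset_card]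
    omega
  rw [Function.not_injective_iff] at hnotinj
  obtain ⟨a, b, hab, hne⟩ := hnotinj
  set c := a - b with hc
  have hc0 : c ≠ 0 := sub_ne_zero.2 hne
  have hTc : T c = 0 := by rw [hc, map_sub, hab, sub_self]
  set exp : (Fin n → Fin (m + 1)) → (Fin n →₀ ℕ) :=
    fun α => Finsupp.equivFunOnFinite.symm (fun i => (α i : ℕ)) with hexp
  have hexpinj : Function.Injective exp := by
    intro α β h
    funext i
    have := congrArg (fun g => (Finsupp.equivFunOnFinite g : (Fin n → ℕ)) i) h
    simpa [hexp, Fin.ext_iff] using this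
  refine ⟨∑ α, monomial (exp α) (c α), ?_, ?_, ?_⟩
  · intro h0
    obtain ⟨α₀, hα₀⟩ := Function.ne_iff.1 hc0
    have : coeff (exp α₀) (∑ α, monomial (exp α) (c α)) = c α₀ := by
      rw [coeff_sum]
      rw [Finset.sum_eq_single α₀]
      · simp [coeff_monomial]
      · intro β _ hβ
        rw [coeff_monomial, if_neg (fun h => hβ (hexpinj h))]
      · simp
    rw [h0] at this
    simp at this
    exact hα₀ this.symm
  · refine totalDegree_finsetSum_le fun α _ => ?_
    refine (totalDegree_monomial_le _ _).trans ?_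
    have : (exp α).sum (fun _ e => e) = ∑ i, (α i : ℕ) := by
      rw [hexp, Finsupp.sum_fintype]
      · simp
      · simp
    simp only [Function.id_def]
    rw [this]
    calc ∑ i, (α i : ℕ) ≤ ∑ _i : Fin n, m := Finset.sum_le_sum fun i _ => by omega
    _ = n * m := by simp [Finset.sum_const, mul_comm]
  · intro x hx
    have := congrFun hTc ⟨x, hx⟩
    simp only [hT, LinearMap.coe_mk, AddHom.coe_mk, Pi.zero_apply] at this
    rw [map_sum]
    rw [← this]
    refine Finset.sum_congr rfl fun α _ => ?_
    rw [eval_monomial, Finsupp.prod_fintype]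
    · simp [hq, hexp]
    · simp

open MvPolynomial Polynomial in
noncomputable def lineComp (v b : Fin n → F) (p : MvPolynomial (Fin n) F) : Polynomial F :=
  MvPolynomial.aeval (fun i => Polynomial.C (v i) + Polynomial.X * Polynomial.C (b i)) p

open MvPolynomial Polynomial in
lemma lineComp_eval (v b : Fin n → F) (p : MvPolynomial (Fin n) F) (t : F) :
    (lineComp v b p).eval t = MvPolynomial.eval (v + t • b) p := by
  induction p using MvPolynomial.induction_on with
  | C a => simp [lineComp]
  | add p q hp hq =>
    unfold lineComp at hp hq ⊢
    rw [map_add, Polynomial.eval_add, hp, hq, map_add]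
  | mul_X p i hp =>
    simp only [lineComp, map_mul, Polynomial.eval_mul, MvPolynomial.aeval_X,
      Polynomial.eval_add, Polynomial.eval_C, Polynomial.eval_mul, Polynomial.eval_X] at *
    rw [hp]
    simp [MvPolynomial.eval_mul, mul_comm]

open MvPolynomial Polynomial in
lemma lineComp_natDegree_le (v b : Fin n → F) (p : MvPolynomial (Fin n) F) :
    (lineComp v b p).natDegree ≤ p.totalDegree := by
  classical
  conv_lhs => rw [← support_sum_monomial_coeff p]
  unfold lineComp
  rw [map_sum]
  refine Polynomial.natDegree_sum_le_of_forall_le _ _ fun s hs => ?_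
  rw [MvPolynomial.aeval_monomial]
  refine (Polynomial.natDegree_mul_le).trans ?_
  have h1 : (algebraMap F (Polynomial F) (coeff s p)).natDegree = 0 := by
    simp [Polynomial.natDegree_C]
  rw [h1, zero_add]
  refine le_trans ?_ (le_totalDegree hs)
  rw [Finsupp.prod]
  refine (Polynomial.natDegree_prod_le _ _).trans ?_
  rw [Finsupp.sum]
  refine Finset.sum_le_sum fun i _ => ?_
  refine (Polynomial.natDegree_pow_le).trans ?_
  have : (Polynomial.C (v i) + Polynomial.X * Polynomial.C (b i)).natDegree ≤ 1 := by
    refine (Polynomial.natDegree_add_le _ _).trans ?_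
    simp [Polynomial.natDegree_C]
    exact (Polynomial.natDegree_mul_le).trans (by simp)
  calc (s i) * (Polynomial.C (v i) + Polynomial.X * Polynomial.C (b i)).natDegree
      ≤ s i * 1 := Nat.mul_le_mul_left _ this
  _ = s i := by omega

open MvPolynomial Polynomial in
lemma lineComp_coeff_zero (v b : Fin n → F) (p : MvPolynomial (Fin n) F) :
    (lineComp v b p).coeff 0 = MvPolynomial.eval v p := by
  rw [Polynomial.coeff_zero_eq_eval_zero, lineComp_eval]
  simp

open MvPolynomial Polynomial in
lemma lineComp_coeff_one (v b : Fin n → F) (p : MvPolynomial (Fin n) F) :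
    (lineComp v b p).coeff 1 =
      MvPolynomial.eval v (∑ i, MvPolynomial.C (b i) * MvPolynomial.pderiv i p) := by
  classical
  induction p using MvPolynomial.induction_on with
  | C a => simp [lineComp]
  | add p q hp hq =>
    unfold lineComp at *
    rw [map_add, Polynomial.coeff_add, hp, hq]
    simp only [map_add, mul_add, Finset.sum_add_distrib]
  | mul_X p i hp =>
    have hsplit : lineComp v b (p * X i)
        = lineComp v b p * (Polynomial.C (v i) + Polynomial.X * Polynomial.C (b i)) := by
      unfold lineComp; rw [map_mul, MvPolynomial.aeval_X]
    have h1' : (lineComp v b p * Polynomial.X).coeff 1 = (lineComp v b p).coeff 0 := by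
      simpa using Polynomial.coeff_mul_X (lineComp v b p) 0
    rw [hsplit, mul_add, Polynomial.coeff_add, Polynomial.coeff_mul_C, hp, ← mul_assoc,
      Polynomial.coeff_mul_C, h1', lineComp_coeff_zero]
    have hR : ∀ j, MvPolynomial.C (b j) * MvPolynomial.pderiv j (p * X i)
        = MvPolynomial.C (b j) * MvPolynomial.pderiv j p * X i
          + (if j = i then MvPolynomial.C (b i) * p else 0) := by
      intro j
      rw [pderiv_mul]
      rcases eq_or_ne j i with rfl | hne
      · rw [if_pos rfl, pderiv_X_self, mul_one, mul_add, mul_assoc]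
      · rw [if_neg hne, pderiv_X_of_ne (Ne.symm hne), mul_zero, add_zero, add_zero, mul_assoc]
    calc (MvPolynomial.eval v) (∑ j, MvPolynomial.C (b j) * MvPolynomial.pderiv j p) * v i
          + (MvPolynomial.eval v) p * b i
        = (MvPolynomial.eval v) ((∑ j, MvPolynomial.C (b j) * MvPolynomial.pderiv j p) * X i
            + MvPolynomial.C (b i) * p) := by
          simp [mul_comm, mul_assoc]
      _ = (MvPolynomial.eval v) (∑ j, MvPolynomial.C (b j) * MvPolynomial.pderiv j (p * X i)) := by
          congr 1
          rw [Finset.sum_congr rfl fun j _ => hR j, Finset.sum_add_distrib, Finset.sum_mul]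
          simp

open MvPolynomial in
lemma pderiv_eval_zero_of_span {p : MvPolynomial (Fin n) F} {x : Fin n → F}
    {b : Fin n → Fin n → F} (hspan : Submodule.span F (Set.range b) = ⊤)
    (h : ∀ i, MvPolynomial.eval x (∑ j, MvPolynomial.C (b i j) * pderiv j p) = 0) :
    ∀ j, MvPolynomial.eval x (pderiv j p) = 0 := by
  classical
  set φ : (Fin n → F) →ₗ[F] F :=
    ∑ j, (MvPolynomial.eval x (pderiv j p)) • LinearMap.proj j with hφ
  have hφappl : ∀ c : Fin n → F, φ c = ∑ j, MvPolynomial.eval x (pderiv j p) * c j := by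
    intro c
    simp [hφ, LinearMap.sum_apply, LinearMap.smul_apply, LinearMap.proj_apply]
  have hφb : ∀ i, φ (b i) = 0 := by
    intro i
    rw [hφappl]
    have := h i
    rw [map_sum] at this
    simp only [map_mul, eval_C] at this
    rw [← this]
    exact Finset.sum_congr rfl fun j _ => mul_comm _ _
  have hker : Submodule.span F (Set.range b) ≤ LinearMap.ker φ := by
    rw [Submodule.span_le]
    rintro _ ⟨i, rfl⟩
    exact hφb i
  rw [hspan, top_le_iff] at hker
  intro j
  have : φ (Pi.single j 1) = 0 := by
    have : Pi.single j 1 ∈ LinearMap.ker φ := hker ▸ Submodule.mem_top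
    exact this
  rw [hφappl] at this
  rw [Finset.sum_eq_single j] at this
  · simpa using this
  · intro k _ hk
    rw [Pi.single_eq_of_ne hk, mul_zero]
  · simp

open MvPolynomial in
lemma coeff_pderiv_eq {p : MvPolynomial (Fin n) F} (i : Fin n) (α : Fin n →₀ ℕ)
    (hi : α i ≠ 0) :
    MvPolynomial.coeff (α - Finsupp.single i 1) (MvPolynomial.pderiv i p)
      = (α i : F) * MvPolynomial.coeff α p := by
  classical
  conv_lhs => rw [← support_sum_monomial_coeff p]
  rw [map_sum, coeff_sum]
  simp only [pderiv_monomial]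
  rw [Finset.sum_eq_single α]
  · rw [coeff_monomial, if_pos rfl, mul_comm]
  · intro β _ hβα
    rw [coeff_monomial]
    split_ifs with h
    · by_cases hβi : β i = 0
      · simp [hβi]
      · exfalso
        apply hβα
        ext j
        have hj := DFunLike.congr_fun h j
        rw [Finsupp.tsub_apply, Finsupp.tsub_apply] at hj
        rcases eq_or_ne j i with rfl | hne
        · rw [Finsupp.single_eq_same] at hj
          omega
        · rw [Finsupp.single_eq_of_ne' (Ne.symm hne)] at hj
          omega
    · rfl
  · intro hα
    rw [coeff_monomial, if_pos rfl]
    rw [MvPolynomial.notMem_support_iff.1 hα]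
    simp

open MvPolynomial in
lemma pderiv_zero_dvd {p : MvPolynomial (Fin n) F} {i : Fin n}
    (h : MvPolynomial.pderiv i p = 0) {α : Fin n →₀ ℕ} (hα : α ∈ p.support)
    (q : ℕ) [CharP F q] : q ∣ α i := by
  by_cases hi : α i = 0
  · simp [hi]
  · have hc := coeff_pderiv_eq (p := p) i α hi
    rw [h] at hc
    simp only [coeff_zero] at hc
    rcases mul_eq_zero.1 hc.symm with h1 | h2
    · exact (CharP.cast_eq_zero_iff F q _).1 h1
    · exact absurd h2 (mem_support_iff.1 hα)

open MvPolynomial in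
lemma totalDegree_zero_of_pderiv_zero [CharP F 0]
    {p : MvPolynomial (Fin n) F} (h : ∀ i, MvPolynomial.pderiv i p = 0) :
    p.totalDegree = 0 := by
  rw [totalDegree_eq_zero_iff]
  intro α hα i
  have := pderiv_zero_dvd (h i) hα 0
  simpa using this

open MvPolynomial in
lemma exists_pow_char_eq {q : ℕ} [CharP F q] (hq : q.Prime)
    (hsurj : Function.Surjective (fun a : F => a ^ q))
    {p : MvPolynomial (Fin n) F} (h : ∀ i, MvPolynomial.pderiv i p = 0) :
    ∃ g : MvPolynomial (Fin n) F, p = g ^ q ∧ g.totalDegree ≤ p.totalDegree / q := by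
  classical
  haveI : CharP (MvPolynomial (Fin n) F) q :=
    charP_of_injective_ringHom (C_injective (Fin n) F) q
  haveI : Fact q.Prime := ⟨hq⟩
  have hq0 : 0 < q := hq.pos
  set r : F → F := Function.surjInv hsurj with hr
  have hrq : ∀ a : F, (r a) ^ q = a := fun a => Function.surjInv_eq hsurj a
  set dv : (Fin n →₀ ℕ) → (Fin n →₀ ℕ) :=
    fun α => Finsupp.mapRange (· / q) (Nat.zero_div q) α with hdv
  have hdvapp : ∀ α j, dv α j = α j / q := fun α j => Finsupp.mapRange_apply
  set g : MvPolynomial (Fin n) F :=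
    ∑ α ∈ p.support, monomial (dv α) (r (coeff α p)) with hg
  have hdvd : ∀ α ∈ p.support, ∀ j, q ∣ α j := fun α hα j => pderiv_zero_dvd (h j) hα q
  refine ⟨g, ?_, ?_⟩
  · rw [hg, sum_pow_char]
    conv_lhs => rw [← support_sum_monomial_coeff p]
    refine Finset.sum_congr rfl fun α hα => ?_
    rw [monomial_pow, hrq]
    have heq : q • dv α = α := by
      ext j
      rw [Finsupp.smul_apply, hdvapp, smul_eq_mul]
      exact Nat.mul_div_cancel' (hdvd α hα j)
    rw [heq]
  · rw [hg]
    refine totalDegree_finsetSum_le fun α hα => ?_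
    refine (totalDegree_monomial_le _ _).trans ?_
    have hsum : (dv α).sum (fun _ e => e) = ∑ j, α j / q := by
      rw [Finsupp.sum_fintype]
      · exact Finset.sum_congr rfl fun j _ => hdvapp α j
      · simp
    have hsum2 : (∑ j, α j / q) * q = ∑ j, α j := by
      rw [Finset.sum_mul]
      exact Finset.sum_congr rfl fun j _ => Nat.div_mul_cancel (hdvd α hα j)
    have hle : ∑ j, α j ≤ p.totalDegree := by
      refine le_trans (le_of_eq ?_) (le_totalDegree hα)
      rw [Finsupp.sum_fintype]
      simp
    have : (dv α).sum (fun _ e => e) * q ≤ p.totalDegree := by rw [hsum, hsum2]; exact hle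
    exact Nat.le_div_iff_mul_le hq0 |>.2 this

open MvPolynomial in
lemma totalDegree_pderiv_le (p : MvPolynomial (Fin n) F) (j : Fin n) :
    (MvPolynomial.pderiv j p).totalDegree ≤ p.totalDegree - 1 := by
  classical
  conv_lhs => rw [← support_sum_monomial_coeff p]
  rw [map_sum]
  refine totalDegree_finsetSum_le fun α hα => ?_
  rw [pderiv_monomial]
  by_cases hj : α j = 0
  · rw [hj]
    simp
  · refine (totalDegree_monomial_le _ _).trans ?_
    have h1 : (α - Finsupp.single j 1).sum (fun _ e => e) = ∑ i, (α i - Finsupp.single j 1 i) := by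
      rw [Finsupp.sum_fintype]
      · exact Finset.sum_congr rfl fun i _ => Finsupp.tsub_apply α (Finsupp.single j 1) i
      · simp
    simp only [Function.id_def]
    rw [h1, Finset.sum_tsub_distrib]
    · have h2 : ∑ i, (Finsupp.single j 1 : Fin n →₀ ℕ) i = 1 := by
        simp [Finsupp.single_apply]
      have h3 : ∑ i, α i ≤ p.totalDegree := by
        refine le_trans (le_of_eq ?_) (le_totalDegree hα)
        rw [Finsupp.sum_fintype]
        simp
      omega
    · intro i _
      rcases eq_or_ne i j with rfl | hne
      · rw [Finsupp.single_eq_same]; omega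
      · rw [Finsupp.single_eq_of_ne' (Ne.symm hne)]; omega

open MvPolynomial in
lemma eq_C_of_totalDegree_zero {p : MvPolynomial (Fin n) F} (h : p.totalDegree = 0) :
    p = MvPolynomial.C (coeff 0 p) := by
  rw [totalDegree_eq_zero_iff] at h
  ext β
  rcases eq_or_ne β 0 with rfl | hb
  · simp
  · rw [coeff_C, if_neg (Ne.symm hb)]
    by_cases hβ : β ∈ p.support
    · exfalso
      apply hb
      ext i
      exact h β hβ i
    · exact MvPolynomial.notMem_support_iff.1 hβ

open MvPolynomial Polynomial in
lemma key_selection_perfect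
    (hperf : ∀ q : ℕ, q.Prime → CharP F q → Function.Surjective (fun a : F => a ^ q))
    {𝔏 : Finset (Set (Fin n → F))}
    {K : Set (Fin n → F)} (hKfin : K.Finite) (hKne : K.Nonempty)
    (hjoint : ∀ x ∈ K, IsJoint F ↑𝔏 x) {m : ℕ} (hm : K.ncard < (m + 1) ^ n) :
    ∃ l ∈ 𝔏, (K ∩ l).ncard ≤ n * m := by
  classical
  by_contra hcon
  push_neg at hcon
  set S := {d : ℕ | ∃ p : MvPolynomial (Fin n) F, p ≠ 0 ∧ p.totalDegree = d ∧
    ∀ x ∈ K, MvPolynomial.eval x p = 0} with hS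
  obtain ⟨p₀, hp₀, hdeg₀, hvan₀⟩ := exists_vanishing_poly hKfin hm
  have hSne : S.Nonempty := ⟨p₀.totalDegree, p₀, hp₀, rfl, hvan₀⟩
  set d := sInf S with hd
  obtain ⟨p, hp0, hpd, hpvan⟩ := Nat.sInf_mem hSne
  rw [← hd] at hpd
  have hmin : ∀ g : MvPolynomial (Fin n) F, g ≠ 0 →
      (∀ x ∈ K, MvPolynomial.eval x g = 0) → d ≤ g.totalDegree :=
    fun g hg hgv => Nat.sInf_le ⟨g, hg, rfl, hgv⟩
  have hdle : d ≤ n * m := le_trans (Nat.sInf_le ⟨p₀, hp₀, rfl, hvan₀⟩) hdeg₀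
  have hd1 : 1 ≤ d := by
    by_contra hlt
    have hdz : p.totalDegree = 0 := by omega
    have hC := eq_C_of_totalDegree_zero hdz
    obtain ⟨x₀, hx₀⟩ := hKne
    have h0 := hpvan x₀ hx₀
    rw [hC, MvPolynomial.eval_C] at h0
    exact hp0 (by rw [hC, h0, map_zero])
  -- all partial derivatives vanish on K
  have hderiv : ∀ x ∈ K, ∀ j, MvPolynomial.eval x (MvPolynomial.pderiv j p) = 0 := by
    intro x hx
    obtain ⟨l, hlinj, hlmem, hthrough, b, hbdir, hbspan⟩ := hjoint x hx
    refine pderiv_eval_zero_of_span hbspan ?_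
    intro i
    have hline : l i = {z | ∃ t : F, z = x + t • (b i)} :=
      mem_line_base (hbdir i) (hthrough i)
    have hcomp : lineComp x (b i) p = 0 := by
      set L := K ∩ l i with hL
      have hLfin : L.Finite := hKfin.inter_of_left _
      haveI := hLfin.fintype
      have hpts : ∀ y : L, ∃ t : F, (y : Fin n → F) = x + t • (b i) := by
        rintro ⟨y, hy⟩
        have : y ∈ l i := hy.2
        rw [hline] at this
        exact this
      set f : L → F := fun y => (hpts y).choose with hf
      have hfspec : ∀ y : L, (y : Fin n → F) = x + (f y) • (b i) := fun y => (hpts y).choose_spec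
      have hfinj : Function.Injective f := by
        intro y y' h
        have : (y : Fin n → F) = y' := by rw [hfspec y, hfspec y', h]
        exact Subtype.ext this
      refine Polynomial.eq_zero_of_natDegree_lt_card_of_eval_eq_zero _ hfinj ?_ ?_
      · intro y
        rw [lineComp_eval, ← hfspec y]
        exact hpvan _ (y.2.1)
      · have hdeg2 : (lineComp x (b i) p).natDegree ≤ n * m :=
          (lineComp_natDegree_le _ _ _).trans (hpd.le.trans hdle)
        have hcard : n * m < Fintype.card L := by
          have h5 := hcon (l i) (hlmem i)
          rw [← hL, Set.ncard_eq_toFinset_card', Set.toFinset_card] at h5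
          exact h5
        exact lt_of_le_of_lt hdeg2 hcard
    have h1 := lineComp_coeff_one x (b i) p
    rw [hcomp] at h1
    simpa using h1.symm
  have hpz : ∀ j, MvPolynomial.pderiv j p = 0 := by
    intro j
    by_contra hne
    have h1 := hmin _ hne (fun x hx => hderiv x hx j)
    have h2 := totalDegree_pderiv_le p j
    rw [hpd] at h2
    omega
  obtain ⟨q, hq⟩ := CharP.exists F
  rcases CharP.char_is_prime_or_zero F q with hqp | hq0
  · obtain ⟨g, hgq, hgd⟩ := exists_pow_char_eq hqp (hperf q hqp hq) hpz
    have hg0 : g ≠ 0 := by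
      intro h0
      rw [h0, zero_pow hqp.pos.ne'] at hgq
      exact hp0 hgq
    have hgvan : ∀ x ∈ K, MvPolynomial.eval x g = 0 := by
      intro x hx
      have := hpvan x hx
      rw [hgq, map_pow] at this
      exact pow_eq_zero_iff hqp.pos.ne' |>.1 this
    have := hmin g hg0 hgvan
    rw [hpd] at hgd
    have : d ≤ d / q := le_trans this hgd
    have := Nat.div_lt_self (by omega : 0 < d) hqp.one_lt
    omega
  · subst hq0
    have := totalDegree_zero_of_pderiv_zero hpz
    omega

lemma span_top_transfer {F' : Type*} [Field F'] (σ : F →+* F')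
    (bb : Fin n → Fin n → F) (h : Submodule.span F (Set.range bb) = ⊤) :
    Submodule.span F' (Set.range (fun i => fun j => σ (bb i j))) = ⊤ := by
  classical
  rw [eq_top_iff]
  intro z _
  rw [pi_eq_sum_univ z]
  refine Submodule.sum_mem _ fun i _ => Submodule.smul_mem _ _ ?_
  have hei : (Pi.single i 1 : Fin n → F) ∈ Submodule.span F (Set.range bb) := by
    rw [h]; exact Submodule.mem_top
  rw [Finsupp.mem_span_range_iff_exists_finsupp] at hei
  obtain ⟨c, hc⟩ := hei
  have key : (fun j => if i = j then (1 : F') else 0)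
      = c.sum fun k ck => σ ck • (fun j => σ (bb k j)) := by
    funext j
    rw [Finsupp.sum, Finset.sum_apply]
    have h2 : ∀ k, (σ (c k) • (fun j' => σ (bb k j'))) j = σ (c k * bb k j) := by
      intro k; simp [map_mul]
    rw [Finset.sum_congr rfl fun k _ => h2 k, ← map_sum]
    have h3 : ∑ k ∈ c.support, c k * bb k j = (Pi.single i 1 : Fin n → F) j := by
      have h4 := congrFun hc j
      rw [Finsupp.sum, Finset.sum_apply] at h4
      simpa using h4
    rw [h3]
    rcases eq_or_ne i j with rfl | hne
    · simp
    · simp [Pi.single_eq_of_ne (Ne.symm hne), hne]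
  rw [key]
  rw [Finsupp.sum]
  refine Submodule.sum_mem _ fun k _ => Submodule.smul_mem _ _ ?_
  exact Submodule.subset_span ⟨k, rfl⟩

lemma key_selection {𝔏 : Finset (Set (Fin n → F))} (hlines : ∀ l ∈ 𝔏, IsLine F l)
    {K : Set (Fin n → F)} (hKfin : K.Finite) (hKne : K.Nonempty)
    (hjoint : ∀ x ∈ K, IsJoint F ↑𝔏 x) {m : ℕ} (hm : K.ncard < (m + 1) ^ n) :
    ∃ l ∈ 𝔏, (K ∩ l).ncard ≤ n * m := by
  classical
  set F' := AlgebraicClosure F with hF'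
  set σ : F →+* F' := algebraMap F F' with hσ
  have hσinj : Function.Injective σ := RingHom.injective σ
  set Φ : (Fin n → F) → (Fin n → F') := fun x j => σ (x j) with hΦ
  have hΦinj : Function.Injective Φ := fun x y h => funext fun i => hσinj (congrFun h i)
  choose v b hb hleq using fun (l : ↥𝔏) => hlines l.1 l.2
  set E : ↥𝔏 → Set (Fin n → F') :=
    fun l => {x | ∃ t : F', x = Φ (v l) + t • Φ (b l)} with hE
  -- Φ x ∈ E l ↔ x ∈ l
  have factA : ∀ (l : ↥𝔏) (x : Fin n → F), Φ x ∈ E l ↔ x ∈ (l : Set (Fin n → F)) := by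
    intro l x
    constructor
    · rintro ⟨t, ht⟩
      obtain ⟨j, hj0⟩ := Function.ne_iff.1 (hb l)
      have hj : b l j ≠ 0 := by simpa using hj0
      have hcomp := congrFun ht j
      simp only [hΦ, Pi.add_apply, Pi.smul_apply, smul_eq_mul] at hcomp
      have hbj : σ (b l j) ≠ 0 := fun h => hj (hσinj (by rw [h, map_zero]))
      set s : F := (x j - v l j) / b l j with hs
      have hts : t = σ s := by
        rw [hs, map_div₀, map_sub, eq_div_iff hbj, hcomp]
        ring
      have hxeq : x = v l + s • b l := by
        apply hΦinj
        funext i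
        have := congrFun ht i
        simp only [hΦ, Pi.add_apply, Pi.smul_apply, smul_eq_mul] at this ⊢
        rw [this, hts, map_add, map_mul]
      rw [hleq l]
      exact ⟨s, hxeq⟩
    · intro hx
      rw [hleq l] at hx
      obtain ⟨s, rfl⟩ := hx
      refine ⟨σ s, ?_⟩
      funext i
      simp [hΦ, map_add, map_mul]
  -- joints transfer
  set 𝔏' : Finset (Set (Fin n → F')) := 𝔏.attach.image E with h𝔏'
  have hjoint' : ∀ y ∈ Φ '' K, IsJoint F' ↑𝔏' y := by
    rintro _ ⟨x, hx, rfl⟩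
    obtain ⟨l, hlinj, hlmem, hthrough, bb, hbbdir, hbbspan⟩ := hjoint x hx
    set l' : Fin n → Set (Fin n → F') := fun i => E ⟨l i, hlmem i⟩ with hl'
    have hEpre : ∀ i, (Φ ⁻¹' (E ⟨l i, hlmem i⟩)) = l i := by
      intro i; ext z; exact factA _ z
    refine ⟨l', ?_, ?_, ?_, ?_⟩
    · intro i j hij
      apply hlinj
      rw [← hEpre i, ← hEpre j]
      exact congrArg (Set.preimage Φ) hij
    · intro i
      rw [h𝔏']
      simp only [Finset.coe_image, Set.mem_image]
      exact ⟨⟨l i, hlmem i⟩, by simp, rfl⟩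
    · intro i
      exact (factA ⟨l i, hlmem i⟩ x).2 (hthrough i)
    · refine ⟨fun i => Φ (bb i), fun i => ?_, ?_⟩
      · -- direction
        obtain ⟨c, hc0, hcb⟩ := direction_proportional (hbbdir i)
          ⟨hb ⟨l i, hlmem i⟩, v ⟨l i, hlmem i⟩, hleq ⟨l i, hlmem i⟩⟩
        have hbbne : Φ (bb i) ≠ 0 := by
          intro h0
          apply (hbbdir i).1
          apply hΦinj
          rw [h0]
          funext j; simp [hΦ]
        refine ⟨hbbne, Φ (v ⟨l i, hlmem i⟩), ?_⟩
        have hcσ : σ c ≠ 0 := fun h => hc0 (hσinj (by rw [h, map_zero]))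
        have hsm : Φ (b ⟨l i, hlmem i⟩) = σ c • Φ (bb i) := by
          funext j
          simp only [hΦ, Pi.smul_apply, smul_eq_mul, ← map_mul]
          rw [hcb]
          simp
        show {x : Fin n → F' | ∃ t : F', x = Φ (v ⟨l i, hlmem i⟩) + t • Φ (b ⟨l i, hlmem i⟩)}
            = {x | ∃ t : F', x = Φ (v ⟨l i, hlmem i⟩) + t • Φ (bb i)}
        rw [hsm, line_smul_direction _ _ hcσ]
      · exact span_top_transfer σ bb hbbspan
  -- apply perfect-field version
  have hperf : ∀ q : ℕ, q.Prime → CharP F' q → Function.Surjective (fun a : F' => a ^ q) :=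
    fun q hq _ a => IsAlgClosed.exists_pow_nat_eq a hq.pos
  have hK'fin : (Φ '' K).Finite := hKfin.image Φ
  have hK'ne : (Φ '' K).Nonempty := hKne.image Φ
  have hm' : (Φ '' K).ncard < (m + 1) ^ n := by
    rwa [Set.ncard_image_of_injective _ hΦinj]
  obtain ⟨l', hl'mem, hl'card⟩ := key_selection_perfect hperf hK'fin hK'ne hjoint' hm'
  rw [h𝔏'] at hl'mem
  simp only [Finset.mem_image, Finset.mem_attach, true_and] at hl'mem
  obtain ⟨l₀, hl₀⟩ := hl'mem
  refine ⟨l₀.1, l₀.2, ?_⟩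
  have himg : Φ '' (K ∩ l₀.1) ⊆ (Φ '' K) ∩ l' := by
    rintro _ ⟨z, ⟨hz1, hz2⟩, rfl⟩
    exact ⟨⟨z, hz1, rfl⟩, by rw [← hl₀]; exact (factA l₀ z).2 hz2⟩
  calc (K ∩ l₀.1).ncard = (Φ '' (K ∩ l₀.1)).ncard :=
        (Set.ncard_image_of_injective _ hΦinj).symm
  _ ≤ ((Φ '' K) ∩ l').ncard := Set.ncard_le_ncard himg (hK'fin.inter_of_left _)
  _ ≤ n * m := hl'card

lemma partition_aux (hn : 0 < n) :
    ∀ (N : ℕ) (𝔏 : Finset (Set (Fin n → F))), 𝔏.card = N →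
    (∀ l ∈ 𝔏, IsLine F l) →
    ∀ (K : Set (Fin n → F)), K.Finite → (∀ x ∈ K, IsJoint F ↑𝔏 x) →
    ∀ m : ℕ, K.ncard < (m + 1) ^ n →
    ∃ P : Finset (Set (Fin n → F)), P.card ≤ 𝔏.card ∧ ⋃₀ ↑P = K ∧
      (↑P : Set (Set (Fin n → F))).Pairwise Disjoint ∧ ∀ A ∈ P, A.ncard ≤ n * m := by
  classical
  intro N
  induction N with
  | zero =>
    intro 𝔏 hcard hlines K hKfin hjoint m hm
    refine ⟨∅, by simp, ?_, by simp, by simp⟩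
    rw [Finset.card_eq_zero] at hcard
    subst hcard
    simp only [Finset.coe_empty, Set.sUnion_empty]
    symm
    rw [Set.eq_empty_iff_forall_notMem]
    intro x hx
    obtain ⟨l, -, hmem, -⟩ := hjoint x hx
    simpa using hmem ⟨0, hn⟩
  | succ N ih =>
    intro 𝔏 hcard hlines K hKfin hjoint m hm
    rcases Set.eq_empty_or_nonempty K with rfl | hKne
    · exact ⟨∅, by simp, by simp, by simp, by simp⟩
    obtain ⟨l, hl𝔏, hlsmall⟩ := key_selection hlines hKfin hKne hjoint hm
    set K' := K \ l with hK'
    have hK'fin : K'.Finite := hKfin.diff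
    have hK'joint : ∀ x ∈ K', IsJoint F ↑(𝔏.erase l) x := by
      rintro x ⟨hxK, hxl⟩
      obtain ⟨li, hliinj, hlimem, hforms⟩ := hjoint x hxK
      refine ⟨li, hliinj, fun i => ?_, hforms⟩
      simp only [Finset.coe_erase, Set.mem_diff, Set.mem_singleton_iff]
      refine ⟨hlimem i, fun h => hxl ?_⟩
      rw [← h]
      exact hforms.1 i
    have hK'm : K'.ncard < (m + 1) ^ n :=
      lt_of_le_of_lt (Set.ncard_le_ncard (Set.diff_subset) hKfin) hm
    have herase : (𝔏.erase l).card = N := by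
      rw [Finset.card_erase_of_mem hl𝔏, hcard]
      rfl
    obtain ⟨P', hP'card, hP'union, hP'disj, hP'bound⟩ :=
      ih (𝔏.erase l) herase (fun l' hl' => hlines l' (Finset.mem_of_mem_erase hl'))
        K' hK'fin hK'joint m hK'm
    refine ⟨insert (K ∩ l) P', ?_, ?_, ?_, ?_⟩
    · calc (insert (K ∩ l) P').card ≤ P'.card + 1 := Finset.card_insert_le _ _
      _ ≤ N + 1 := by omega
      _ = 𝔏.card := hcard.symm
    · rw [Finset.coe_insert, Set.sUnion_insert, hP'union]
      ext z
      simp only [Set.mem_union, Set.mem_inter_iff, Set.mem_diff, hK', Set.mem_diff]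
      tauto
    · rw [Finset.coe_insert]
      refine Set.Pairwise.insert hP'disj ?_
      intro B hB hne
      have hBsub : B ⊆ K' := by
        rw [← hP'union]
        exact Set.subset_sUnion_of_mem hB
      have hdisj : Disjoint (K ∩ l) B := by
        rw [Set.disjoint_left]
        intro a ha haB
        exact (hBsub haB).2 ha.2
      exact ⟨hdisj, hdisj.symm⟩
    · intro A hA
      rcases Finset.mem_insert.1 hA with rfl | hA'
      · exact hlsmall
      · exact hP'bound A hA'

theorem stmt10' (hn : 3 ≤ n) :
    ∃ C : ℝ, ∀ (F : Type) [Field F] (𝔏 : Finset (Set (Fin n → F))) (K : Set (Fin n → F)),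
      (∀ l ∈ 𝔏, IsLine F l) → (∀ x ∈ K, IsJoint F ↑𝔏 x) →
      ∃ P : Finset (Set (Fin n → F)), P.card ≤ 𝔏.card ∧
        ⋃₀ ↑P = K ∧ (↑P : Set (Set (Fin n → F))).Pairwise Disjoint ∧
        ∀ A ∈ P, (A.ncard : ℝ) ≤ C * (K.ncard : ℝ) ^ (1 / (n : ℝ)) := by
  refine ⟨(n : ℝ), ?_⟩
  intro F _ 𝔏 K hlines hjoint
  have hn0 : 0 < n := by omega
  have hKfin : K.Finite := joints_finite (by omega) hlines hjoint
  rcases Nat.eq_zero_or_pos K.ncard with hk0 | hk1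
  · have hKe : K = ∅ := (Set.ncard_eq_zero hKfin).1 hk0
    refine ⟨∅, by simp, ?_, by simp, by simp⟩
    simp [hKe]
  · set k := K.ncard with hk
    set m := sInf {m : ℕ | k < (m + 1) ^ n} with hm
    have hsetne : {m : ℕ | k < (m + 1) ^ n}.Nonempty :=
      ⟨k, lt_of_lt_of_le (Nat.lt_succ_self k) (Nat.le_self_pow (by omega) _)⟩
    have hmmem : k < (m + 1) ^ n := Nat.sInf_mem hsetne
    have hlow : m ^ n ≤ k := by
      rcases Nat.eq_zero_or_pos m with h0 | h1
      · rw [h0, zero_pow (by omega : n ≠ 0)]; omega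
      · by_contra hlt
        push_neg at hlt
        have hmem : (m - 1) ∈ {m : ℕ | k < (m + 1) ^ n} := by
          simp only [Set.mem_setOf_eq]
          have heq : m - 1 + 1 = m := by omega
          rw [heq]; exact hlt
        have := Nat.sInf_le hmem
        omega
    obtain ⟨P, hPcard, hPunion, hPdisj, hPbound⟩ :=
      partition_aux hn0 𝔏.card 𝔏 rfl hlines K hKfin hjoint m hmmem
    refine ⟨P, hPcard, hPunion, hPdisj, ?_⟩
    intro A hA
    have h1 : (A.ncard : ℝ) ≤ (n : ℝ) * m := by exact_mod_cast hPbound A hA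
    refine h1.trans ?_
    have hnne : (n : ℝ) ≠ 0 := Nat.cast_ne_zero.mpr (by omega)
    have hm_le : (m : ℝ) ≤ (k : ℝ) ^ (1 / (n : ℝ)) := by
      have hcast : ((m : ℝ)) ^ (n : ℕ) ≤ (k : ℝ) := by exact_mod_cast hlow
      have h2 : (((m : ℝ)) ^ (n : ℕ)) ^ (1 / (n : ℝ)) ≤ (k : ℝ) ^ (1 / (n : ℝ)) :=
        Real.rpow_le_rpow (by positivity) hcast (by positivity)
      calc (m : ℝ) = (((m : ℝ)) ^ (n : ℕ)) ^ (1 / (n : ℝ)) := by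
            rw [← Real.rpow_natCast (m : ℝ) n, ← Real.rpow_mul (by positivity)]
            rw [mul_one_div, div_self hnne, Real.rpow_one]
      _ ≤ _ := h2
    exact mul_le_mul_of_nonneg_left hm_le (by positivity)

/-- For `n ≥ 3` there is a constant `C` depending only on `n` such that for any field
`F`, any finite collection `𝔏` of `L` lines in `F^n` and any subset `K` of the joints
of `𝔏`, the set `K` can be partitioned into at most `L` pairwise disjoint sets, each of
cardinality at most `C·|K|^{1/n}`. -/
theorem stmt10 (n : ℕ) (hn : 3 ≤ n) :
    ∃ C : ℝ, ∀ (F : Type) [Field F] (𝔏 : Finset (Set (Fin n → F))) (K : Set (Fin n → F)),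
      (∀ l ∈ 𝔏, IsLine F l) → (∀ x ∈ K, IsJoint F ↑𝔏 x) →
      ∃ P : Finset (Set (Fin n → F)), P.card ≤ 𝔏.card ∧
        ⋃₀ ↑P = K ∧ (↑P : Set (Set (Fin n → F))).Pairwise Disjoint ∧
        ∀ A ∈ P, (A.ncard : ℝ) ≤ C * (K.ncard : ℝ) ^ (1 / (n : ℝ)) := stmt10' hn
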